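/- Let B be a finite nonempty set of measurable predictors β : 𝒳 → 𝒴, let r : 𝒴 × 𝒴 → [0, C] be a measurable loss bounded by C > 0, and let (x_1, y_1), …, (x_n, y_n) be i.i.d. random pairs in 𝒳 × 𝒴. Define the population risk R(β) := E[r(β(x_1), y_1)] and the empirical risk R̂_n(β) := (1/n) Σ_{i=1}^n r(β(x_i), y_i). Fix a probability vector z on B, λ > 0, and let θ̂_λ be the minimizer over probability vectors θ on B of θ ↦ Σ_β θ(β) R̂_n(β) + λ D_KL(θ, z). Then for every δ > 0, with probability at least 1 − e^{−δ}, simultaneously for all probability vectors θ on B: Σ_β θ̂_λ(β) R(β) − Σ_β θ(β) R(β) ≤ C²(log(2|B|) + δ)/(2nλ) + 2λ D_KL(θ, z). In particular, for any b > 0, choosing λ = (C/2)·√( (log(2|B|) + δ)/(n b) ) gives, with probability at least 1 − e^{−δ}: Σ_β θ̂_λ(β) R(β) − inf_{θ : D_KL(θ, z) ≤ b} Σ_β θ(β) R(β) ≤ 2C·√( b(log(2|B|) + δ)/n ). -/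

import Mathlib

open Finset MeasureTheory ProbabilityTheory

/-- Kullback–Leibler divergence `Σ_β p(β) log(p(β)/q(β))` between probability vectors on a
finite type (finite-valued formula, with the convention `0 · log 0 = 0`; it agrees with the
usual KL divergence whenever `p` is absolutely continuous with respect to `q`). -/
noncomputable def klFin {B : Type*} [Fintype B] (p q : B → ℝ) : ℝ :=
  ∑ β, p β * Real.log (p β / q β)


set_option maxHeartbeats 1000000

section AuxGibbs

lemma hoeff_calc (p : ℝ) (hp0 : 0 ≤ p) (hp1 : p ≤ 1) (x : ℝ) :
    (1 - p) * Real.exp (-p * x) + p * Real.exp ((1 - p) * x) ≤ Real.exp (x ^ 2 / 8) := by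
  set q : ℝ := 1 - p with hq
  clear_value q
  have hq0 : 0 ≤ q := by rw [hq]; linarith
  have hD : ∀ h : ℝ, 0 < q + p * Real.exp h := by
    intro h
    rcases hp0.lt_or_eq with h0 | h0
    · nlinarith [Real.exp_pos h]
    · have hq1 : q = 1 := by rw [hq, ← h0]; ring
      rw [← h0]; simp [hq1]
  set F : ℝ → ℝ := fun h => Real.log (q + p * Real.exp h) - p * h with hF
  set Φ : ℝ → ℝ := fun h => p * Real.exp h / (q + p * Real.exp h) - p with hΦ
  have hFd : ∀ h, HasDerivAt F (Φ h) h := by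
    intro h
    have h1 : HasDerivAt (fun h => q + p * Real.exp h) (p * Real.exp h) h :=
      ((Real.hasDerivAt_exp h).const_mul p).const_add q
    have h2 : HasDerivAt (fun h : ℝ => p * h) (p * 1) h := (hasDerivAt_id h).const_mul p
    rw [hF]
    have := (h1.log (hD h).ne').sub h2
    exact this.congr_deriv (by simp [hΦ])
  have hΦd : ∀ h, HasDerivAt Φ (p * q * Real.exp h / (q + p * Real.exp h) ^ 2) h := by
    intro h
    have h1 : HasDerivAt (fun h => p * Real.exp h) (p * Real.exp h) h :=
      (Real.hasDerivAt_exp h).const_mul p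
    have h2 : HasDerivAt (fun h => q + p * Real.exp h) (p * Real.exp h) h :=
      ((Real.hasDerivAt_exp h).const_mul p).const_add q
    have h3 := (h1.div h2 (hD h).ne').sub_const p
    refine h3.congr_deriv ?_
    have hne := (hD h).ne'
    field_simp
    ring
  have hΦ0 : Φ 0 = 0 := by
    simp only [hΦ, Real.exp_zero, mul_one]
    have hqp : q + p = 1 := by rw [hq]; ring
    rw [hqp]; simp
  have hΦbd : ∀ h : ℝ, |Φ h| ≤ |h| / 4 := by
    intro h
    have key := Convex.norm_image_sub_le_of_norm_hasDerivWithin_le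
      (f := Φ) (f' := fun h => p * q * Real.exp h / (q + p * Real.exp h) ^ 2)
      (s := Set.univ) (C := 1/4)
      (fun x _ => (hΦd x).hasDerivWithinAt)
      (fun x _ => by
        have hv := hD x
        rw [Real.norm_eq_abs, abs_of_nonneg (by positivity)]
        rw [div_le_iff₀ (pow_pos hv 2)]
        nlinarith [sq_nonneg (q - p * Real.exp x), Real.exp_pos x])
      convex_univ (Set.mem_univ h) (Set.mem_univ 0)
    rw [hΦ0, zero_sub, zero_sub, norm_neg, norm_neg, Real.norm_eq_abs, Real.norm_eq_abs] at key
    linarith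
  set G : ℝ → ℝ := fun h => F h - h ^ 2 / 8 with hG
  have hGd : ∀ h, HasDerivAt G (Φ h - h / 4) h := by
    intro h
    have h2 : HasDerivAt (fun h : ℝ => h ^ 2 / 8) (2 * h ^ 1 / 8) h :=
      (hasDerivAt_pow 2 h).div_const 8
    have he : Φ h - h / 4 = Φ h - 2 * h ^ 1 / 8 := by ring
    rw [he]
    exact (hFd h).sub h2
  have hG0 : G 0 = 0 := by
    simp only [hG, hF]
    have hqe : q + p * Real.exp 0 = 1 := by rw [hq]; simp
    rw [hqe]; simp
  have hGle : ∀ h : ℝ, G h ≤ 0 := by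
    intro h
    rcases le_total 0 h with hh | hh
    · have := antitoneOn_of_deriv_nonpos (convex_Ici 0) (f := G)
        (fun x _ => (hGd x).continuousAt.continuousWithinAt)
        (fun x _ => ((hGd x).differentiableAt).differentiableWithinAt)
        (fun x hx => by
          rw [(hGd x).deriv]
          rw [interior_Ici] at hx
          have hx0 : (0:ℝ) < x := hx
          have := hΦbd x
          have habs : Φ x ≤ |x| / 4 := (abs_le.mp this).2
          rw [abs_of_pos hx0] at habs
          linarith)
      have := this (Set.self_mem_Ici) (Set.mem_Ici.mpr hh) hh
      rw [hG0] at this; linarith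
    · have := monotoneOn_of_deriv_nonneg (convex_Iic 0) (f := G)
        (fun x _ => (hGd x).continuousAt.continuousWithinAt)
        (fun x _ => ((hGd x).differentiableAt).differentiableWithinAt)
        (fun x hx => by
          rw [(hGd x).deriv]
          rw [interior_Iic] at hx
          have hx0 : x < (0:ℝ) := hx
          have := hΦbd x
          have habs : -(|x| / 4) ≤ Φ x := (abs_le.mp this).1
          rw [abs_of_neg hx0] at habs
          linarith)
      have := this (Set.mem_Iic.mpr hh) (Set.self_mem_Iic) hh
      rw [hG0] at this; linarith
  have hFle : F x ≤ x ^ 2 / 8 := by have := hGle x; simp only [hG] at this; linarith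
  have hLHS : (1 - p) * Real.exp (-p * x) + p * Real.exp ((1 - p) * x) = Real.exp (F x) := by
    rw [hF]
    simp only []
    rw [Real.exp_sub, Real.exp_log (hD x)]
    rw [show (1 - p) * x = x + -p * x by ring, Real.exp_add]
    have hme : Real.exp (-(p * x)) * Real.exp (p * x) = 1 := by
      rw [← Real.exp_add]; simp
    field_simp [hq]
    linear_combination (p * Real.exp x - p + 1) * hme - hq
  rw [hq, hLHS]
  exact Real.exp_le_exp.mpr hFle



lemma hoeff_combo (a b m t : ℝ) (hab : a < b) (hm : m ∈ Set.Icc a b) :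
    ((b - m) * Real.exp (t * a) + (m - a) * Real.exp (t * b)) / (b - a) ≤
      Real.exp (t * m + t ^ 2 * (b - a) ^ 2 / 8) := by
  have hba : (0:ℝ) < b - a := by linarith
  have hba' : b - a ≠ 0 := hba.ne'
  have hp0 : 0 ≤ (m - a) / (b - a) := div_nonneg (by linarith [hm.1]) hba.le
  have hp1 : (m - a) / (b - a) ≤ 1 := by rw [div_le_one hba]; linarith [hm.2]
  have hc := hoeff_calc _ hp0 hp1 (t * (b - a))
  have ea : -((m - a) / (b - a)) * (t * (b - a)) = t * a - t * m := by
    field_simp; ring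
  have eb : (1 - (m - a) / (b - a)) * (t * (b - a)) = t * b - t * m := by
    field_simp; ring
  rw [ea, eb] at hc
  have hmul := mul_le_mul_of_nonneg_right hc (Real.exp_nonneg (t * m))
  have final : ((b - m) * Real.exp (t * a) + (m - a) * Real.exp (t * b)) / (b - a)
      = ((1 - (m - a) / (b - a)) * Real.exp (t * a - t * m)
          + (m - a) / (b - a) * Real.exp (t * b - t * m)) * Real.exp (t * m) := by
    rw [Real.exp_sub, Real.exp_sub]
    field_simp [Real.exp_ne_zero]
    ring
  have e3 : Real.exp ((t * (b - a)) ^ 2 / 8) * Real.exp (t * m)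
      = Real.exp (t * m + t ^ 2 * (b - a) ^ 2 / 8) := by
    rw [← Real.exp_add]; congr 1; ring
  rw [final, ← e3]
  exact hmul

lemma exp_convex_bound (a b x t : ℝ) (hab : a < b) (hx : x ∈ Set.Icc a b) :
    Real.exp (t * x) ≤ ((b - x) * Real.exp (t * a) + (x - a) * Real.exp (t * b)) / (b - a) := by
  have hba : (0:ℝ) < b - a := by linarith
  have hw1 : 0 ≤ (b - x) / (b - a) := div_nonneg (by linarith [hx.2]) hba.le
  have hw2 : 0 ≤ (x - a) / (b - a) := div_nonneg (by linarith [hx.1]) hba.le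
  have hsum : (b - x) / (b - a) + (x - a) / (b - a) = 1 := by field_simp; ring
  have hc := convexOn_exp.2 (Set.mem_univ (t * a)) (Set.mem_univ (t * b)) hw1 hw2 hsum
  rw [smul_eq_mul, smul_eq_mul, smul_eq_mul, smul_eq_mul] at hc
  have harg : (b - x) / (b - a) * (t * a) + (x - a) / (b - a) * (t * b) = t * x := by
    field_simp; ring
  rw [harg] at hc
  calc Real.exp (t * x) ≤ (b - x) / (b - a) * Real.exp (t * a)
        + (x - a) / (b - a) * Real.exp (t * b) := hc
    _ = ((b - x) * Real.exp (t * a) + (x - a) * Real.exp (t * b)) / (b - a) := by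
        field_simp

lemma sum_exp_le {B : Type*} [Fintype B] (z X : B → ℝ) (hz0 : ∀ β, 0 ≤ z β)
    (hz1 : ∑ β, z β = 1) (a b t : ℝ) (hX : ∀ β, X β ∈ Set.Icc a b) :
    ∑ β, z β * Real.exp (t * X β) ≤
      Real.exp (t * (∑ β, z β * X β) + t ^ 2 * (b - a) ^ 2 / 8) := by
  have hne : Nonempty B := by
    by_contra h
    rw [not_nonempty_iff] at h
    simp [Finset.univ_eq_empty] at hz1
  obtain ⟨β₀⟩ := hne
  have hab : a ≤ b := (hX β₀).1.trans (hX β₀).2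
  set m := ∑ β, z β * X β with hm
  have hma : a ≤ m := by
    rw [hm]
    calc a = ∑ β, z β * a := by rw [← Finset.sum_mul, hz1, one_mul]
      _ ≤ ∑ β, z β * X β :=
        Finset.sum_le_sum fun β _ => mul_le_mul_of_nonneg_left (hX β).1 (hz0 β)
  have hmb : m ≤ b := by
    rw [hm]
    calc ∑ β, z β * X β ≤ ∑ β, z β * b :=
        Finset.sum_le_sum fun β _ => mul_le_mul_of_nonneg_left (hX β).2 (hz0 β)
      _ = b := by rw [← Finset.sum_mul, hz1, one_mul]
  rcases eq_or_lt_of_le hab with rfl | hab'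
  · have hXa : ∀ β, X β = a := fun β => le_antisymm (hX β).2 (hX β).1
    have l1 : ∑ β, z β * Real.exp (t * X β) = Real.exp (t * a) := by
      simp only [hXa]; rw [← Finset.sum_mul, hz1, one_mul]
    have l2 : m = a := by rw [hm]; simp only [hXa]; rw [← Finset.sum_mul, hz1, one_mul]
    rw [l1, l2]
    simp
  · have step1 : ∑ β, z β * Real.exp (t * X β) ≤
        ∑ β, z β * (((b - X β) * Real.exp (t * a) + (X β - a) * Real.exp (t * b)) / (b - a)) :=
      Finset.sum_le_sum fun β _ =>
        mul_le_mul_of_nonneg_left (exp_convex_bound a b (X β) t hab' (hX β)) (hz0 β)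
    have step2 : ∑ β, z β * (((b - X β) * Real.exp (t * a) + (X β - a) * Real.exp (t * b)) / (b - a))
        = ((b - m) * Real.exp (t * a) + (m - a) * Real.exp (t * b)) / (b - a) := by
      rw [eq_div_iff (by linarith : b - a ≠ 0)]
      rw [Finset.sum_mul]
      have : ∀ β ∈ Finset.univ (α := B),
          z β * (((b - X β) * Real.exp (t * a) + (X β - a) * Real.exp (t * b)) / (b - a)) * (b - a)
          = (b * Real.exp (t * a) - a * Real.exp (t * b)) * z β
            + (Real.exp (t * b) - Real.exp (t * a)) * (z β * X β) := by
        intro β _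
        rw [mul_assoc, div_mul_cancel₀ _ (sub_ne_zero_of_ne hab'.ne')]
        ring
      rw [Finset.sum_congr rfl this, Finset.sum_add_distrib, ← Finset.mul_sum, ← Finset.mul_sum,
        hz1, ← hm]
      ring
    calc ∑ β, z β * Real.exp (t * X β)
        ≤ ((b - m) * Real.exp (t * a) + (m - a) * Real.exp (t * b)) / (b - a) := by
          rw [← step2]; exact step1
      _ ≤ Real.exp (t * m + t ^ 2 * (b - a) ^ 2 / 8) :=
          hoeff_combo a b m t hab' ⟨hma, hmb⟩

lemma integrable_of_mem_Icc {W : Type*} [MeasurableSpace W] (P : Measure W)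
    [IsProbabilityMeasure P] (f : W → ℝ) (hf : Measurable f) (lo hi : ℝ)
    (hbdd : ∀ w, f w ∈ Set.Icc lo hi) : Integrable f P := by
  refine ⟨hf.aestronglyMeasurable, ?_⟩
  refine HasFiniteIntegral.of_bounded (C := max |lo| |hi|) (ae_of_all _ fun w => ?_)
  rw [Real.norm_eq_abs]
  rcases hbdd w with ⟨h1, h2⟩
  rw [abs_le]
  constructor
  · have := neg_abs_le lo
    have := le_max_left |lo| |hi|
    linarith
  · have := le_abs_self hi
    have := le_max_right |lo| |hi|
    linarith

lemma int_exp_le {W : Type*} [MeasurableSpace W] (P : Measure W) [IsProbabilityMeasure P]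
    (X : W → ℝ) (hX : Measurable X) (a b t : ℝ) (hXab : ∀ w, X w ∈ Set.Icc a b) :
    ∫ w, Real.exp (t * X w) ∂P ≤
      Real.exp (t * (∫ w, X w ∂P) + t ^ 2 * (b - a) ^ 2 / 8) := by
  have hW : Nonempty W := by
    by_contra h
    rw [not_nonempty_iff] at h
    have h1 := measure_univ (μ := P)
    rw [Set.univ_eq_empty_iff.mpr h, measure_empty] at h1
    simp at h1
  obtain ⟨w₀⟩ := hW
  have hab : a ≤ b := (hXab w₀).1.trans (hXab w₀).2
  have hXint : Integrable X P := integrable_of_mem_Icc P X hX a b hXab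
  set m := ∫ w, X w ∂P with hm
  have hma : a ≤ m := by
    rw [hm]
    calc a = ∫ _, a ∂P := by simp
      _ ≤ ∫ w, X w ∂P := integral_mono (integrable_const a) hXint fun w => (hXab w).1
  have hmb : m ≤ b := by
    rw [hm]
    calc ∫ w, X w ∂P ≤ ∫ _, b ∂P := integral_mono hXint (integrable_const b) fun w => (hXab w).2
      _ = b := by simp
  have hexp_bdd : ∀ w, Real.exp (t * X w) ∈ Set.Icc 0 (Real.exp (|t| * max |a| |b|)) := by
    intro w
    constructor
    · exact (Real.exp_pos _).le
    · apply Real.exp_le_exp.mpr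
      have h1 : |X w| ≤ max |a| |b| := by
        rcases hXab w with ⟨ha, hb⟩
        rw [abs_le]
        constructor
        · have := neg_abs_le a; have := le_max_left |a| |b|; linarith
        · have := le_abs_self b; have := le_max_right |a| |b|; linarith
      calc t * X w ≤ |t * X w| := le_abs_self _
        _ = |t| * |X w| := abs_mul t (X w)
        _ ≤ |t| * max |a| |b| := mul_le_mul_of_nonneg_left h1 (abs_nonneg t)
  have hEint : Integrable (fun w => Real.exp (t * X w)) P :=
    integrable_of_mem_Icc P _ (by fun_prop) _ _ hexp_bdd
  rcases eq_or_lt_of_le hab with rfl | hab'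
  · have hXa : ∀ w, X w = a := fun w => le_antisymm (hXab w).2 (hXab w).1
    have l1 : ∫ w, Real.exp (t * X w) ∂P = Real.exp (t * a) := by
      simp only [hXa]; simp
    have l2 : m = a := by rw [hm]; simp only [hXa]; simp
    rw [l1, l2]
    simp
  · have i1 : Integrable (fun w => (b - X w) * Real.exp (t * a)) P :=
      ((integrable_const b).sub hXint).mul_const _
    have i2 : Integrable (fun w => (X w - a) * Real.exp (t * b)) P :=
      (hXint.sub (integrable_const a)).mul_const _
    have step1 : ∫ w, Real.exp (t * X w) ∂P ≤
        ∫ w, ((b - X w) * Real.exp (t * a) + (X w - a) * Real.exp (t * b)) / (b - a) ∂P :=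
      integral_mono hEint ((i1.add i2).div_const _) fun w =>
        exp_convex_bound a b (X w) t hab' (hXab w)
    have step2 : ∫ w, ((b - X w) * Real.exp (t * a) + (X w - a) * Real.exp (t * b)) / (b - a) ∂P
        = ((b - m) * Real.exp (t * a) + (m - a) * Real.exp (t * b)) / (b - a) := by
      rw [integral_div, integral_add i1 i2, integral_mul_const, integral_mul_const,
        integral_sub (integrable_const b) hXint, integral_sub hXint (integrable_const a)]
      simp [hm]
    calc ∫ w, Real.exp (t * X w) ∂P
        ≤ ((b - m) * Real.exp (t * a) + (m - a) * Real.exp (t * b)) / (b - a) := by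
          rw [← step2]; exact step1
      _ ≤ Real.exp (t * m + t ^ 2 * (b - a) ^ 2 / 8) := hoeff_combo a b m t hab' ⟨hma, hmb⟩




lemma dv_bound {B : Type*} [Fintype B] (z p X : B → ℝ) (hz0 : ∀ β, 0 ≤ z β)
    (hz1 : ∑ β, z β = 1) (hp0 : ∀ β, 0 ≤ p β) (hp1 : ∑ β, p β = 1)
    (hac : ∀ β, z β = 0 → p β = 0) (a b : ℝ) (hX : ∀ β, X β ∈ Set.Icc a b)
    (t : ℝ) (ht : 0 < t) :
    ∑ β, p β * X β ≤ klFin p z / t + (∑ β, z β * X β) + t * (b - a) ^ 2 / 8 := by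
  set S := ∑ β, z β * Real.exp (t * X β) with hSdef
  have hS_pos : 0 < S := by
    obtain ⟨β₀, hβ₀⟩ : ∃ β₀, 0 < z β₀ := by
      by_contra h
      push_neg at h
      have : ∀ β ∈ Finset.univ (α := B), z β = 0 :=
        fun β _ => le_antisymm (h β) (hz0 β)
      rw [Finset.sum_eq_zero this] at hz1
      norm_num at hz1
    calc (0:ℝ) < z β₀ * Real.exp (t * X β₀) := by positivity
      _ ≤ S := Finset.single_le_sum (f := fun β => z β * Real.exp (t * X β))
          (fun β _ => mul_nonneg (hz0 β) (Real.exp_nonneg _)) (Finset.mem_univ β₀)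
  have key : ∀ β ∈ Finset.univ (α := B),
      p β * (t * X β) - p β * Real.log (p β / z β) ≤
        p β * Real.log S + (z β * Real.exp (t * X β) / S - p β) := by
    intro β _
    rcases (hp0 β).lt_or_eq with hppos | hpzero
    · have hzpos : 0 < z β := by
        rcases (hz0 β).lt_or_eq with h | h
        · exact h
        · exact absurd (hac β h.symm) (by linarith)
      have hlog := Real.log_le_sub_one_of_pos
        (show 0 < z β * Real.exp (t * X β) / (p β * S) by positivity)
      have e1 : Real.log (z β * Real.exp (t * X β) / (p β * S)) =
          Real.log (z β) + t * X β - Real.log (p β) - Real.log S := by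
        rw [Real.log_div (by positivity) (by positivity),
          Real.log_mul hzpos.ne' (Real.exp_ne_zero _),
          Real.log_mul hppos.ne' hS_pos.ne', Real.log_exp]
        ring
      rw [e1] at hlog
      have hmul : p β * (Real.log (z β) + t * X β - Real.log (p β) - Real.log S) ≤
          z β * Real.exp (t * X β) / S - p β := by
        calc p β * (Real.log (z β) + t * X β - Real.log (p β) - Real.log S)
            ≤ p β * (z β * Real.exp (t * X β) / (p β * S) - 1) :=
              mul_le_mul_of_nonneg_left hlog hppos.le
          _ = z β * Real.exp (t * X β) / S - p β := by
              field_simp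
      have e3 : Real.log (p β / z β) = Real.log (p β) - Real.log (z β) :=
        Real.log_div hppos.ne' hzpos.ne'
      rw [e3]
      nlinarith [hmul]
    · rw [← hpzero]
      have hnn : (0:ℝ) ≤ z β * Real.exp (t * X β) / S :=
        div_nonneg (mul_nonneg (hz0 β) (Real.exp_nonneg _)) hS_pos.le
      nlinarith [hnn]
  have hsum := Finset.sum_le_sum key
  have l : ∑ β, (p β * (t * X β) - p β * Real.log (p β / z β)) =
      t * (∑ β, p β * X β) - klFin p z := by
    rw [Finset.sum_sub_distrib]
    congr 1
    rw [Finset.mul_sum]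
    exact Finset.sum_congr rfl fun β _ => by ring
  have r : ∑ β, (p β * Real.log S + (z β * Real.exp (t * X β) / S - p β)) = Real.log S := by
    rw [Finset.sum_add_distrib, Finset.sum_sub_distrib, ← Finset.sum_mul, hp1, one_mul,
      ← Finset.sum_div, ← hSdef, div_self hS_pos.ne']
    ring
  rw [l, r] at hsum
  have hlogS : Real.log S ≤ t * (∑ β, z β * X β) + t ^ 2 * (b - a) ^ 2 / 8 :=
    (Real.log_le_iff_le_exp hS_pos).mpr (sum_exp_le z X hz0 hz1 a b t hX)
  have hfin : t * (∑ β, p β * X β) ≤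
      klFin p z + t * (∑ β, z β * X β) + t ^ 2 * (b - a) ^ 2 / 8 := by linarith
  have h2 : (t * (∑ β, p β * X β)) / t ≤
      (klFin p z + t * (∑ β, z β * X β) + t ^ 2 * (b - a) ^ 2 / 8) / t :=
    div_le_div_of_nonneg_right hfin ht.le
  have e4 : (t * (∑ β, p β * X β)) / t = ∑ β, p β * X β := by
    field_simp
  have e5 : (klFin p z + t * (∑ β, z β * X β) + t ^ 2 * (b - a) ^ 2 / 8) / t =
      klFin p z / t + (∑ β, z β * X β) + t * (b - a) ^ 2 / 8 := by
    field_simp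
  rw [e4, e5] at h2
  exact h2


lemma det_bound {B : Type*} [Fintype B] (eps lam : ℝ) (hlam : 0 < lam)
    (Rh R z th p : B → ℝ) (hclose : ∀ β, |Rh β - R β| ≤ eps)
    (hz0 : ∀ β, 0 ≤ z β) (hz1 : ∑ β, z β = 1)
    (hth0 : ∀ β, 0 ≤ th β) (hth1 : ∑ β, th β = 1) (hthac : ∀ β, z β = 0 → th β = 0)
    (hp0 : ∀ β, 0 ≤ p β) (hp1 : ∑ β, p β = 1) (hpac : ∀ β, z β = 0 → p β = 0)
    (hmin : (∑ β, th β * Rh β) + lam * klFin th z ≤ (∑ β, p β * Rh β) + lam * klFin p z) :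
    (∑ β, th β * R β) - ∑ β, p β * R β ≤ eps ^ 2 / lam + 2 * lam * klFin p z := by
  have hX1 : ∀ β, (R β - Rh β) ∈ Set.Icc (-eps) eps := by
    intro β
    have := abs_le.mp (hclose β)
    constructor <;> [linarith [this.2]; linarith [this.1]]
  have hX2 : ∀ β, (Rh β - R β) ∈ Set.Icc (-eps) eps := by
    intro β
    have := abs_le.mp (hclose β)
    constructor <;> [linarith [this.1]; linarith [this.2]]
  have h1 := dv_bound z th (fun β => R β - Rh β) hz0 hz1 hth0 hth1 hthac (-eps) eps hX1
    (1 / lam) (by positivity)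
  have h2 := dv_bound z p (fun β => Rh β - R β) hz0 hz1 hp0 hp1 hpac (-eps) eps hX2
    (1 / lam) (by positivity)
  have a1 : ∑ β, th β * (R β - Rh β) = (∑ β, th β * R β) - ∑ β, th β * Rh β := by
    rw [← Finset.sum_sub_distrib]; exact Finset.sum_congr rfl fun β _ => by ring
  have a2 : ∑ β, p β * (Rh β - R β) = (∑ β, p β * Rh β) - ∑ β, p β * R β := by
    rw [← Finset.sum_sub_distrib]; exact Finset.sum_congr rfl fun β _ => by ring
  have a3 : (∑ β, z β * (R β - Rh β)) + (∑ β, z β * (Rh β - R β)) = 0 := by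
    rw [← Finset.sum_add_distrib]
    exact Finset.sum_eq_zero fun β _ => by ring
  have d1 : klFin th z / (1 / lam) = lam * klFin th z := by
    field_simp
  have d2 : klFin p z / (1 / lam) = lam * klFin p z := by
    field_simp
  have d3 : (1 / lam) * (eps - -eps) ^ 2 / 8 = eps ^ 2 / (2 * lam) := by
    field_simp
    ring
  simp only [a1, a2, d1, d2, d3] at h1 h2
  have hq : eps ^ 2 / (2 * lam) + eps ^ 2 / (2 * lam) = eps ^ 2 / lam := by
    field_simp
    ring
  linarith [h1, h2, hmin, a3]

end AuxGibbs

/-- **High-probability excess risk bound for the Gibbs randomized predictor with a bounded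
loss.** Let `B` be a finite nonempty set of measurable predictors `pred β : 𝓧 → 𝓨`, let
`r : 𝓨 × 𝓨 → [0, C]` be a measurable bounded loss, and let `data i : W → 𝓧 × 𝓨`,
`i < n`, be i.i.d. samples. With population risk `Rpop β = E[r(β(x₁), y₁)]`, empirical risk
`Rn w β = (1/n) Σ_i r(β(xᵢ), yᵢ)`, prior `z`, `lam > 0`, and `θhat w` the minimizer of
`θ ↦ Σ_β θ(β)·Rn w β + lam·D_KL(θ, z)` over probability vectors on `B`: for every `δ > 0`,
with probability at least `1 − e^{−δ}`, simultaneously for all probability vectors `θ`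
(with `D_KL(θ, z) < ∞`),
`E_{β∼θhat}[Rpop] − E_{β∼θ}[Rpop] ≤ C²(log(2|B|) + δ)/(2 n lam) + 2 lam D_KL(θ, z)`;
and if moreover `lam = (C/2)·√((log(2|B|) + δ)/(n b))` for some `b > 0`, then with
probability at least `1 − e^{−δ}`,
`E_{β∼θhat}[Rpop] − inf_{θ : D_KL(θ,z) ≤ b} E_{β∼θ}[Rpop] ≤ 2C·√(b(log(2|B|) + δ)/n)`. -/
theorem gibbs_randomized_predictor_risk {𝓧 𝓨 : Type*}
    [MeasurableSpace 𝓧] [MeasurableSpace 𝓨]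
    {B : Type*} [Fintype B] [Nonempty B]
    (pred : B → 𝓧 → 𝓨) (hpred : ∀ β, Measurable (pred β))
    (r : 𝓨 → 𝓨 → ℝ) (hr_meas : Measurable (Function.uncurry r))
    (C : ℝ) (hC : 0 < C) (hr_bdd : ∀ y y', r y y' ∈ Set.Icc (0 : ℝ) C)
    {W : Type*} [MeasurableSpace W] (P : Measure W) [IsProbabilityMeasure P]
    {n : ℕ} (hn : 0 < n)
    (data : Fin n → W → 𝓧 × 𝓨) (hdata_meas : ∀ i, Measurable (data i))
    (hindep : iIndepFun data P)
    (hident : ∀ i, Measure.map (data i) P = Measure.map (data ⟨0, hn⟩) P)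
    (Rn : W → B → ℝ)
    (hRn : ∀ w β, Rn w β = (1 / (n : ℝ)) * ∑ i, r (pred β (data i w).1) (data i w).2)
    (Rpop : B → ℝ)
    (hRpop : ∀ β, Rpop β = ∫ w, r (pred β (data ⟨0, hn⟩ w).1) (data ⟨0, hn⟩ w).2 ∂P)
    (z : B → ℝ) (hz_nonneg : ∀ β, 0 ≤ z β) (hz_sum : ∑ β, z β = 1)
    (lam : ℝ) (hlam : 0 < lam)
    (θhat : W → B → ℝ)
    (hθhat_nonneg : ∀ w β, 0 ≤ θhat w β) (hθhat_sum : ∀ w, ∑ β, θhat w β = 1)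
    (hθhat_ac : ∀ w β, z β = 0 → θhat w β = 0)
    (hmin : ∀ w, ∀ p : B → ℝ, (∀ β, 0 ≤ p β) → ∑ β, p β = 1 →
      (∀ β, z β = 0 → p β = 0) →
      (∑ β, θhat w β * Rn w β) + lam * klFin (θhat w) z ≤
        (∑ β, p β * Rn w β) + lam * klFin p z)
    (δ : ℝ) (hδ : 0 < δ) :
    P {w | ∀ θ : B → ℝ, (∀ β, 0 ≤ θ β) → ∑ β, θ β = 1 → (∀ β, z β = 0 → θ β = 0) →
        (∑ β, θhat w β * Rpop β) - (∑ β, θ β * Rpop β) ≤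
          C ^ 2 * (Real.log (2 * Fintype.card B) + δ) / (2 * n * lam)
            + 2 * lam * klFin θ z} ≥
      ENNReal.ofReal (1 - Real.exp (-δ)) ∧
    (∀ b : ℝ, 0 < b →
      lam = C / 2 * Real.sqrt ((Real.log (2 * Fintype.card B) + δ) / (n * b)) →
      P {w | (∑ β, θhat w β * Rpop β) -
          (⨅ θ : {θ : B → ℝ // (∀ β, 0 ≤ θ β) ∧ ∑ β, θ β = 1 ∧
              (∀ β, z β = 0 → θ β = 0) ∧ klFin θ z ≤ b},
            ∑ β, (θ : B → ℝ) β * Rpop β) ≤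
          2 * C * Real.sqrt (b * (Real.log (2 * Fintype.card B) + δ) / n)} ≥
        ENNReal.ofReal (1 - Real.exp (-δ))) := by
  -- basic quantities
  set L : ℝ := Real.log (2 * Fintype.card B) with hL
  have hcard : (1 : ℕ) ≤ Fintype.card B := Fintype.card_pos
  have hcardR : (1 : ℝ) ≤ (Fintype.card B : ℝ) := by exact_mod_cast hcard
  have hLpos : 0 < L := Real.log_pos (by push_cast; linarith)
  have hLd : 0 < L + δ := by linarith
  have hnR : (0 : ℝ) < (n : ℝ) := by exact_mod_cast hn
  set eps : ℝ := C * Real.sqrt ((L + δ) / (2 * n)) with heps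
  have hepspos : 0 < eps := by
    apply mul_pos hC
    apply Real.sqrt_pos.mpr
    positivity
  have heps2 : eps ^ 2 = C ^ 2 * (L + δ) / (2 * n) := by
    rw [heps, mul_pow, Real.sq_sqrt (by positivity)]
    ring
  -- per-coordinate measurability of the loss evaluated on the data
  have hYmeas : ∀ (β : B) (i : Fin n),
      Measurable (fun w => r (pred β (data i w).1) (data i w).2) := by
    intro β i
    have h1 : Measurable (fun w => (pred β (data i w).1, (data i w).2)) :=
      (((hpred β).comp (measurable_fst.comp (hdata_meas i)))).prodMk
        (measurable_snd.comp (hdata_meas i))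
    exact hr_meas.comp h1
  have hRnmeas : ∀ β, Measurable (fun w => Rn w β) := by
    intro β
    have : (fun w => Rn w β) =
        fun w => (1 / (n : ℝ)) * ∑ i, r (pred β (data i w).1) (data i w).2 :=
      funext fun w => hRn w β
    rw [this]
    exact (Finset.measurable_sum _ fun i _ => hYmeas β i).const_mul _
  -- the good event
  set E : Set W := {w | ∀ β, |Rn w β - Rpop β| ≤ eps} with hE
  have hEmeas : MeasurableSet E := by
    rw [hE]
    have : {w : W | ∀ β, |Rn w β - Rpop β| ≤ eps} =
        ⋂ β, {w : W | |Rn w β - Rpop β| ≤ eps} := by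
      ext w; simp [Set.mem_iInter]
    rw [this]
    exact MeasurableSet.iInter fun β =>
      measurableSet_le (((hRnmeas β).sub measurable_const).abs) measurable_const
  -- Chernoff bound template
  have chern : ∀ (g : 𝓧 × 𝓨 → ℝ) (a0 b0 : ℝ), Measurable g →
      (∀ q, g q ∈ Set.Icc a0 b0) → b0 - a0 = C →
      (∫ w, g (data ⟨0, hn⟩ w) ∂P) = 0 →
      P {w | eps ≤ (1 / (n : ℝ)) * ∑ i, g (data i w)} ≤
        ENNReal.ofReal (Real.exp (-(L + δ))) := by
    intro g a0 b0 hgmeas hgbdd hwidth hgmean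
    set t : ℝ := 4 * eps / C ^ 2 with htdef
    have htpos : 0 < t := by positivity
    have hgi : ∀ i : Fin n, Measurable (fun w => g (data i w)) :=
      fun i => hgmeas.comp (hdata_meas i)
    have hSmeas : Measurable (fun w => ∑ i, g (data i w)) :=
      Finset.measurable_sum _ fun i _ => hgi i
    have hSbdd : ∀ w, (∑ i, g (data i w)) ∈ Set.Icc ((n : ℝ) * a0) ((n : ℝ) * b0) := by
      intro w
      constructor
      · have h1 : ∑ _i : Fin n, a0 ≤ ∑ i, g (data i w) :=
          Finset.sum_le_sum fun i _ => (hgbdd (data i w)).1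
        rwa [Finset.sum_const, Finset.card_univ, Fintype.card_fin, nsmul_eq_mul] at h1
      · have h1 : (∑ i, g (data i w)) ≤ ∑ _i : Fin n, b0 :=
          Finset.sum_le_sum fun i _ => (hgbdd (data i w)).2
        rwa [Finset.sum_const, Finset.card_univ, Fintype.card_fin, nsmul_eq_mul] at h1
    have hint : Integrable (fun w => Real.exp (t * (∑ i, g (data i w)))) P := by
      apply integrable_of_mem_Icc P _ (by fun_prop) 0 (Real.exp (t * ((n : ℝ) * b0)))
      intro w
      exact ⟨(Real.exp_pos _).le,
        Real.exp_le_exp.mpr (mul_le_mul_of_nonneg_left (hSbdd w).2 htpos.le)⟩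
    have hset : {w : W | eps ≤ (1 / (n : ℝ)) * ∑ i, g (data i w)} =
        {w : W | eps * n ≤ (fun w => ∑ i, g (data i w)) w} := by
      ext w
      simp only [Set.mem_setOf_eq]
      rw [one_div, inv_mul_eq_div, le_div_iff₀ hnR]
    have hch := measure_ge_le_exp_mul_mgf (X := fun w => ∑ i, g (data i w)) (μ := P)
      (eps * n) htpos.le hint
    -- identical one-coordinate mgf
    have hmeas_exp : ∀ i : Fin n, Measurable fun q : 𝓧 × 𝓨 => Real.exp (t * g q) := by
      intro i; fun_prop
    have hid : ∀ i : Fin n, mgf (fun w => g (data i w)) P t =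
        ∫ w, Real.exp (t * g (data ⟨0, hn⟩ w)) ∂P := by
      intro i
      show ∫ w, Real.exp (t * g (data i w)) ∂P = _
      rw [← integral_map (hdata_meas i).aemeasurable
          ((hmeas_exp i).aestronglyMeasurable), hident i,
        integral_map (hdata_meas _).aemeasurable ((hmeas_exp i).aestronglyMeasurable)]
    have hone : ∫ w, Real.exp (t * g (data ⟨0, hn⟩ w)) ∂P ≤ Real.exp (t ^ 2 * C ^ 2 / 8) := by
      have h := int_exp_le P (fun w => g (data ⟨0, hn⟩ w)) (hgi _) a0 b0 t
        (fun w => hgbdd (data ⟨0, hn⟩ w))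
      rwa [hgmean, mul_zero, zero_add, hwidth] at h
    have hmgf : mgf (fun w => ∑ i, g (data i w)) P t ≤ Real.exp ((n : ℝ) * (t ^ 2 * C ^ 2 / 8)) := by
      have hfeq : (fun w => ∑ i, g (data i w)) = (∑ i, (g ∘ data i)) := by
        funext w; simp [Finset.sum_apply, Function.comp]
      rw [hfeq, (hindep.comp (fun _ => g) (fun _ => hgmeas)).mgf_sum hgi Finset.univ]
      calc ∏ i : Fin n, mgf (g ∘ data i) P t
          ≤ ∏ _i : Fin n, Real.exp (t ^ 2 * C ^ 2 / 8) :=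
            Finset.prod_le_prod (fun i _ => mgf_nonneg) (fun i _ => by
              have := hid i; rw [show mgf (g ∘ data i) P t = mgf (fun w => g (data i w)) P t from rfl, this]; exact hone)
        _ = Real.exp (t ^ 2 * C ^ 2 / 8) ^ n := by
            rw [Finset.prod_const, Finset.card_univ, Fintype.card_fin]
        _ = Real.exp ((n : ℝ) * (t ^ 2 * C ^ 2 / 8)) := by
            rw [← Real.exp_nat_mul]
    have hexp_eq : -t * (eps * n) + (n : ℝ) * (t ^ 2 * C ^ 2 / 8) = -(L + δ) := by
      rw [htdef]
      have h8 : eps ^ 2 * (n : ℝ) = C ^ 2 * (L + δ) / 2 := by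
        rw [heps2]; field_simp
      field_simp
      nlinarith [h8]
    have hfinal : (P {w | eps * n ≤ (fun w => ∑ i, g (data i w)) w}).toReal ≤
        Real.exp (-(L + δ)) := by
      calc (P {w | eps * n ≤ (fun w => ∑ i, g (data i w)) w}).toReal
          ≤ Real.exp (-t * (eps * n)) * mgf (fun w => ∑ i, g (data i w)) P t := hch
        _ ≤ Real.exp (-t * (eps * n)) * Real.exp ((n : ℝ) * (t ^ 2 * C ^ 2 / 8)) :=
            mul_le_mul_of_nonneg_left hmgf (Real.exp_nonneg _)
        _ = Real.exp (-(L + δ)) := by rw [← Real.exp_add, hexp_eq]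
    rw [hset, ← ENNReal.ofReal_toReal (measure_ne_top P _)]
    exact ENNReal.ofReal_le_ofReal hfinal
  -- probability of the good event
  have hPE : P E ≥ ENNReal.ofReal (1 - Real.exp (-δ)) := by
    -- complement bound
    have hApB : ∀ β : B, P {w | eps ≤ Rn w β - Rpop β} ≤ ENNReal.ofReal (Real.exp (-(L + δ))) := by
      intro β
      have hg : ∀ q : 𝓧 × 𝓨, (r (pred β q.1) q.2 - Rpop β) ∈ Set.Icc (-Rpop β) (C - Rpop β) := by
        intro q
        have := hr_bdd (pred β q.1) q.2
        exact ⟨by linarith [this.1], by linarith [this.2]⟩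
      have hmean : (∫ w, (r (pred β (data ⟨0, hn⟩ w).1) (data ⟨0, hn⟩ w).2 - Rpop β) ∂P) = 0 := by
        rw [integral_sub (integrable_of_mem_Icc P _ (hYmeas β _) 0 C
            (fun w => hr_bdd _ _)) (integrable_const _)]
        rw [integral_const, probReal_univ, one_smul, ← hRpop β, sub_self]
      have hseteq : {w : W | eps ≤ Rn w β - Rpop β} =
          {w : W | eps ≤ (1 / (n : ℝ)) * ∑ i, (fun q : 𝓧 × 𝓨 => r (pred β q.1) q.2 - Rpop β) (data i w)} := by
        ext w
        simp only [Set.mem_setOf_eq]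
        have : (1 / (n : ℝ)) * ∑ i, (r (pred β (data i w).1) (data i w).2 - Rpop β)
            = Rn w β - Rpop β := by
          rw [hRn w β, Finset.sum_sub_distrib, Finset.sum_const, Finset.card_univ,
            Fintype.card_fin, nsmul_eq_mul]
          field_simp
        rw [this]
      rw [hseteq]
      exact chern _ (-Rpop β) (C - Rpop β)
        (by fun_prop) hg (by ring) hmean
    have hAmB : ∀ β : B, P {w | eps ≤ Rpop β - Rn w β} ≤ ENNReal.ofReal (Real.exp (-(L + δ))) := by
      intro β
      have hg : ∀ q : 𝓧 × 𝓨, (Rpop β - r (pred β q.1) q.2) ∈ Set.Icc (Rpop β - C) (Rpop β) := by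
        intro q
        have := hr_bdd (pred β q.1) q.2
        exact ⟨by linarith [this.2], by linarith [this.1]⟩
      have hmean : (∫ w, (Rpop β - r (pred β (data ⟨0, hn⟩ w).1) (data ⟨0, hn⟩ w).2) ∂P) = 0 := by
        rw [integral_sub (integrable_const _) (integrable_of_mem_Icc P _ (hYmeas β _) 0 C
            (fun w => hr_bdd _ _))]
        rw [integral_const, probReal_univ, one_smul, ← hRpop β, sub_self]
      have hseteq : {w : W | eps ≤ Rpop β - Rn w β} =
          {w : W | eps ≤ (1 / (n : ℝ)) * ∑ i, (fun q : 𝓧 × 𝓨 => Rpop β - r (pred β q.1) q.2) (data i w)} := by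
        ext w
        simp only [Set.mem_setOf_eq]
        have : (1 / (n : ℝ)) * ∑ i, (Rpop β - r (pred β (data i w).1) (data i w).2)
            = Rpop β - Rn w β := by
          rw [hRn w β, Finset.sum_sub_distrib, Finset.sum_const, Finset.card_univ,
            Fintype.card_fin, nsmul_eq_mul]
          field_simp
        rw [this]
      rw [hseteq]
      exact chern _ (Rpop β - C) (Rpop β)
        (by fun_prop) hg (by ring) hmean
    have hsub : Eᶜ ⊆ ⋃ β : B, ({w | eps ≤ Rn w β - Rpop β} ∪ {w | eps ≤ Rpop β - Rn w β}) := by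
      intro w hw
      simp only [hE, Set.mem_compl_iff, Set.mem_setOf_eq, not_forall, not_le] at hw
      obtain ⟨β, hβ⟩ := hw
      refine Set.mem_iUnion.mpr ⟨β, ?_⟩
      rcases le_or_gt (Rn w β - Rpop β) 0 with h | h
      · right
        simp only [Set.mem_setOf_eq]
        rw [abs_of_nonpos h] at hβ
        linarith
      · left
        simp only [Set.mem_setOf_eq]
        rw [abs_of_pos h] at hβ
        linarith
    have hEc : P Eᶜ ≤ ENNReal.ofReal (Real.exp (-δ)) := by
      have hcount : P Eᶜ ≤
          ∑' β : B, P ({w | eps ≤ Rn w β - Rpop β} ∪ {w | eps ≤ Rpop β - Rn w β}) :=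
        le_trans (measure_mono hsub) (measure_iUnion_le _)
      rw [tsum_fintype] at hcount
      have hbd : ∑ β : B, P ({w | eps ≤ Rn w β - Rpop β} ∪ {w | eps ≤ Rpop β - Rn w β}) ≤
          ∑ _β : B, (ENNReal.ofReal (Real.exp (-(L + δ))) + ENNReal.ofReal (Real.exp (-(L + δ)))) :=
        Finset.sum_le_sum fun β _ =>
          le_trans (measure_union_le _ _) (add_le_add (hApB β) (hAmB β))
      rw [Finset.sum_const, Finset.card_univ, nsmul_eq_mul] at hbd
      have hred : ((Fintype.card B : ℕ) : ENNReal) *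
          (ENNReal.ofReal (Real.exp (-(L + δ))) + ENNReal.ofReal (Real.exp (-(L + δ)))) =
          ENNReal.ofReal (Real.exp (-δ)) := by
        rw [← ENNReal.ofReal_add (Real.exp_nonneg _) (Real.exp_nonneg _)]
        have hcast : ((Fintype.card B : ENNReal)) = ENNReal.ofReal ((Fintype.card B : ℝ)) := by
          rw [ENNReal.ofReal_natCast]
        rw [hcast]
        rw [← ENNReal.ofReal_mul (by positivity)]
        congr 1
        have h2c : Real.exp (-L) = (2 * (Fintype.card B : ℝ))⁻¹ := by
          rw [hL, Real.exp_neg, Real.exp_log (by positivity)]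
        have hexpL : Real.exp (-(L + δ)) = Real.exp (-δ) / (2 * (Fintype.card B : ℝ)) := by
          rw [show -(L + δ) = -δ + -L from by ring, Real.exp_add, h2c]
          ring
        rw [hexpL]
        field_simp
        ring
      exact le_trans hcount (le_trans hbd (le_of_eq hred))
    have hcompl : P E = 1 - P Eᶜ := by
      have h := prob_compl_eq_one_sub (μ := P) hEmeas.compl
      rwa [compl_compl] at h
    have h1 : ENNReal.ofReal (1 - Real.exp (-δ)) = 1 - ENNReal.ofReal (Real.exp (-δ)) := by
      rw [ENNReal.ofReal_sub _ (Real.exp_nonneg _), ENNReal.ofReal_one]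
    rw [hcompl, ge_iff_le, h1]
    exact tsub_le_tsub_left hEc 1
  -- deterministic consequence on the good event
  have hsub1 : E ⊆ {w | ∀ θ : B → ℝ, (∀ β, 0 ≤ θ β) → ∑ β, θ β = 1 →
      (∀ β, z β = 0 → θ β = 0) →
      (∑ β, θhat w β * Rpop β) - (∑ β, θ β * Rpop β) ≤
        C ^ 2 * (L + δ) / (2 * n * lam) + 2 * lam * klFin θ z} := by
    intro w hw θ hθ0 hθ1 hθac
    have hclose : ∀ β, |Rn w β - Rpop β| ≤ eps := hw
    have h := det_bound eps lam hlam (Rn w) Rpop z (θhat w) θ hclose hz_nonneg hz_sum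
      (hθhat_nonneg w) (hθhat_sum w) (hθhat_ac w) hθ0 hθ1 hθac (hmin w θ hθ0 hθ1 hθac)
    have he : eps ^ 2 / lam = C ^ 2 * (L + δ) / (2 * n * lam) := by
      rw [heps2, div_div]
    rw [he] at h
    exact h
  refine ⟨le_trans hPE (measure_mono hsub1), ?_⟩
  intro b hb hlameq
  set s : ℝ := Real.sqrt ((L + δ) / (n * b)) with hs
  have hspos : 0 < s := Real.sqrt_pos.mpr (by positivity)
  have hs2 : s ^ 2 = (L + δ) / (n * b) := Real.sq_sqrt (by positivity)
  have hbound_eq : C ^ 2 * (L + δ) / (2 * n * lam) + 2 * lam * b =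
      2 * C * Real.sqrt (b * (L + δ) / n) := by
    have hsq : Real.sqrt (b * (L + δ) / n) = b * s := by
      rw [show b * (L + δ) / n = (b * s) ^ 2 from by
        rw [mul_pow, hs2]; field_simp]
      exact Real.sqrt_sq (by positivity)
    rw [hsq, hlameq]
    have hs2' : s ^ 2 * ((n : ℝ) * b) = L + δ := by
      rw [hs2]; field_simp
    field_simp
    nlinarith [hs2', hspos]
  have hklz : klFin z z = 0 := by
    apply Finset.sum_eq_zero
    intro β _
    rcases (hz_nonneg β).lt_or_eq with h | h
    · rw [div_self h.ne', Real.log_one, mul_zero]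
    · rw [← h, zero_mul]
  haveI hne : Nonempty {θ : B → ℝ // (∀ β, 0 ≤ θ β) ∧ ∑ β, θ β = 1 ∧
      (∀ β, z β = 0 → θ β = 0) ∧ klFin θ z ≤ b} :=
    ⟨⟨z, hz_nonneg, hz_sum, fun β h => h, by rw [hklz]; exact hb.le⟩⟩
  have hmono : {w | ∀ θ : B → ℝ, (∀ β, 0 ≤ θ β) → ∑ β, θ β = 1 →
      (∀ β, z β = 0 → θ β = 0) →
      (∑ β, θhat w β * Rpop β) - (∑ β, θ β * Rpop β) ≤
        C ^ 2 * (L + δ) / (2 * n * lam) + 2 * lam * klFin θ z} ⊆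
      {w | (∑ β, θhat w β * Rpop β) -
          (⨅ θ : {θ : B → ℝ // (∀ β, 0 ≤ θ β) ∧ ∑ β, θ β = 1 ∧
              (∀ β, z β = 0 → θ β = 0) ∧ klFin θ z ≤ b},
            ∑ β, (θ : B → ℝ) β * Rpop β) ≤
          2 * C * Real.sqrt (b * (L + δ) / n)} := by
    intro w hw
    simp only [Set.mem_setOf_eq] at hw ⊢
    have hlow : (∑ β, θhat w β * Rpop β) - 2 * C * Real.sqrt (b * (L + δ) / n) ≤
        ⨅ θ : {θ : B → ℝ // (∀ β, 0 ≤ θ β) ∧ ∑ β, θ β = 1 ∧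
            (∀ β, z β = 0 → θ β = 0) ∧ klFin θ z ≤ b},
          ∑ β, (θ : B → ℝ) β * Rpop β := by
      apply le_ciInf
      intro θ
      have h := hw θ.1 θ.2.1 θ.2.2.1 θ.2.2.2.1
      have hklb : klFin θ.1 z ≤ b := θ.2.2.2.2
      have h2 : 2 * lam * klFin θ.1 z ≤ 2 * lam * b :=
        mul_le_mul_of_nonneg_left hklb (by positivity)
      linarith [hbound_eq]
    linarith [hlow]
  exact le_trans hPE (measure_mono (hsub1.trans hmono))
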